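/- Let m > 1, 1 ≤ p < m, let σ be a real number with σ(m−1) + 2(p−1) > 0, let N ≥ 1 be an integer, and set α = (σ+2)/(σ(m−1)+2(p−1)) and β = (m−p)/(σ(m−1)+2(p−1)). Then the planar system X' = X((m−1)Y − 2X), Y' = −Y² − (β/α)Y + X − N X Y has no nonconstant periodic solution lying in the half-plane {X > 0}; that is, there is no differentiable nonconstant function (X,Y) : ℝ → ℝ² solving the system with X(t) > 0 for all t and (X,Y)(t + τ) = (X,Y)(t) for some τ > 0 and all t. -/

import Mathlib

open Set Filter

/-- Dulac's criterion argument (proof of Theorem 1.2, Step 5): the planar system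
X' = X((m-1)Y - 2X), Y' = -Y² - (β/α)Y + X - NXY (restriction of the full system to
the invariant plane {Z = 0}) has no nonconstant periodic orbit in the half-plane
{X > 0}. -/
theorem no_periodic_orbit_in_plane_Z_zero (m p σ : ℝ) (N : ℕ)
    (hm : 1 < m) (hp1 : 1 ≤ p) (hpm : p < m)
    (hL : 0 < σ * (m - 1) + 2 * (p - 1)) (hN : 1 ≤ N)
    (α β : ℝ)
    (hα : α = (σ + 2) / (σ * (m - 1) + 2 * (p - 1)))
    (hβ : β = (m - p) / (σ * (m - 1) + 2 * (p - 1))) :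
    ¬ ∃ (X Y : ℝ → ℝ) (τ : ℝ), 0 < τ ∧
      (∀ t : ℝ, HasDerivAt X (X t * ((m - 1) * Y t - 2 * X t)) t) ∧
      (∀ t : ℝ, HasDerivAt Y
        (-(Y t) ^ 2 - (β / α) * Y t + X t - (N : ℝ) * X t * Y t) t) ∧
      (∀ t : ℝ, 0 < X t) ∧
      (∀ t : ℝ, X (t + τ) = X t ∧ Y (t + τ) = Y t) ∧
      (∃ t₁ t₂ : ℝ, X t₁ ≠ X t₂ ∨ Y t₁ ≠ Y t₂) := by
  rintro ⟨X, Y, τ, hτ, hX', hY', hXpos, hper, t₁, t₂, hne⟩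
  have hM : (0:ℝ) < m - 1 := by linarith
  have hσ2 : (0:ℝ) < σ + 2 := by nlinarith
  have hαpos : 0 < α := by
    rw [hα]; exact div_pos hσ2 hL
  have hβpos : 0 < β := by
    rw [hβ]; exact div_pos (by linarith) hL
  set k : ℝ := β / α with hk
  have hkpos : 0 < k := div_pos hβpos hαpos
  set e : ℝ := 2 / (m - 1) with he
  have hepos : 0 < e := by positivity
  set A : ℝ := (4 / (m - 1) + 2 * (N : ℝ)) / (e + 2) with hA
  set B : ℝ := (2 * k - (m - 1)) / (e + 1) with hB
  set c1 : ℝ := 4 / (m - 1) + 2 + (N : ℝ) with hc1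
  have hc1pos : 0 < c1 := by
    have : (0:ℝ) ≤ (N : ℝ) := Nat.cast_nonneg N
    have h4 : 0 < 4 / (m - 1) := by positivity
    rw [hc1]; linarith
  set w : ℝ → ℝ := fun t => (m - 1) * Y t - 2 * X t with hwdef
  have hw' : ∀ t, HasDerivAt w
      ((m - 1) * (-(Y t) ^ 2 - k * Y t + X t - (N : ℝ) * X t * Y t)
        - 2 * (X t * ((m - 1) * Y t - 2 * X t))) t := fun t =>
    ((hY' t).const_mul (m - 1)).sub ((hX' t).const_mul 2)
  set v : ℝ → ℝ := fun t => X t ^ e * w t ^ 2 / 2 + A * X t ^ (e + 2)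
      + B * X t ^ (e + 1) with hvdef
  set D : ℝ → ℝ := fun t => -((c1 * X t + k) * (X t ^ e * w t ^ 2)) with hDdef
  -- the key derivative computation
  have hv : ∀ t, HasDerivAt v (D t) t := by
    intro t
    have hx := hXpos t
    have hxne : X t ≠ 0 := ne_of_gt hx
    have hXe := (hX' t).rpow_const (p := e) (Or.inl hxne)
    have hXe2 := (hX' t).rpow_const (p := e + 2) (Or.inl hxne)
    have hXe1 := (hX' t).rpow_const (p := e + 1) (Or.inl hxne)
    have hw2 := (hw' t).pow 2
    have hsum := ((hXe.mul hw2).div_const 2).add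
      ((hXe2.const_mul A).add (hXe1.const_mul B))
    have hfun : v = fun s => X s ^ e * w s ^ 2 / 2
        + (A * X s ^ (e + 2) + B * X s ^ (e + 1)) := by
      funext s; rw [hvdef]; ring
    rw [hfun]
    convert hsum using 1
    · rfl
    · rfl
    · rfl
    -- now prove the algebraic identity between the two derivative values
    have hP1 : X t ^ e = X t ^ (e - 1) * X t := by
      have h := Real.rpow_add_one hxne (e - 1)
      rw [show e - 1 + 1 = e by ring] at h
      exact h
    have hP2 : X t ^ (e + 1) = X t ^ e * X t := Real.rpow_add_one hxne e
    have hP3 : X t ^ (e + 2) = X t ^ (e + 1) * X t := by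
      have h := Real.rpow_add_one hxne (e + 1)
      rw [show e + 1 + 1 = e + 2 by ring] at h
      exact h
    rw [show e + 2 - 1 = e + 1 by ring, show e + 1 - 1 = e by ring]
    simp only [hDdef, hwdef]
    rw [hP2, hP1]
    clear hP2 hP3
    norm_num
    set P : ℝ := X t ^ (e - 1) with hP
    have h2pos : (0:ℝ) < e + 2 := by linarith
    have h1pos : (0:ℝ) < e + 1 := by linarith
    rw [hA, hB, hc1, he] at *
    field_simp
    ring
  have hvdiff : Differentiable ℝ v := fun t => (hv t).differentiableAt
  have hDnonpos : ∀ t, D t ≤ 0 := by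
    intro t
    have h1 : 0 ≤ c1 * X t + k := by
      have := mul_nonneg hc1pos.le (hXpos t).le
      linarith
    have h2 : 0 ≤ X t ^ e * w t ^ 2 :=
      mul_nonneg (Real.rpow_nonneg (hXpos t).le e) (sq_nonneg _)
    simp only [hDdef]
    exact neg_nonpos.mpr (mul_nonneg h1 h2)
  have hanti : Antitone v :=
    antitone_of_deriv_nonpos hvdiff (fun t => by rw [(hv t).deriv]; exact hDnonpos t)
  have hvper : ∀ t, v (t + τ) = v t := by
    intro t
    simp only [hvdef, hwdef, (hper t).1, (hper t).2]
  -- periodicity + monotonicity force w ≡ 0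
  have hwzero : ∀ s, (m - 1) * Y s - 2 * X s = 0 := by
    intro s
    have h1 : v (s - τ) = v (s + τ) := by
      have e1 : v (s - τ + τ) = v (s - τ) := hvper _
      rw [sub_add_cancel] at e1
      rw [hvper s, ← e1]
    have hconst : EqOn v (fun _ => v (s + τ)) (Icc (s - τ) (s + τ)) := by
      intro x hx
      have hle1 : v x ≤ v (s - τ) := hanti hx.1
      have hle2 : v (s + τ) ≤ v x := hanti hx.2
      have : v x = v (s + τ) := le_antisymm (h1 ▸ hle1) hle2
      simpa using this
    have hnb : Icc (s - τ) (s + τ) ∈ nhds s :=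
      Icc_mem_nhds (by linarith) (by linarith)
    have hloc : v =ᶠ[nhds s] fun _ => v (s + τ) := eventuallyEq_of_mem hnb hconst
    have h0 : HasDerivAt v 0 s :=
      (hasDerivAt_const s (v (s + τ))).congr_of_eventuallyEq hloc
    have hD0 : D s = 0 := (hv s).unique h0
    simp only [hDdef, hwdef, neg_eq_zero] at hD0
    rcases mul_eq_zero.mp hD0 with h | h
    · exfalso
      have h1 : 0 < c1 * X s + k := by
        have := mul_pos hc1pos (hXpos s)
        linarith
      exact h1.ne' h
    · rcases mul_eq_zero.mp h with h' | h'
      · exact absurd h' (Real.rpow_pos_of_pos (hXpos s) e).ne'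
      · exact pow_eq_zero_iff (two_ne_zero) |>.mp h'
  have hX0 : ∀ t, HasDerivAt X 0 t := by
    intro t
    have h := hX' t
    rw [hwzero t, mul_zero] at h
    exact h
  have hXconst : ∀ s t : ℝ, X s = X t :=
    is_const_of_deriv_eq_zero (fun t => (hX0 t).differentiableAt)
      (fun t => (hX0 t).deriv)
  have hYconst : Y t₁ = Y t₂ := by
    have h1 := hwzero t₁
    have h2 := hwzero t₂
    have h3 := hXconst t₁ t₂
    have : (m - 1) * Y t₁ = (m - 1) * Y t₂ := by linarith
    exact mul_left_cancel₀ hM.ne' this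
  rcases hne with h | h
  · exact h (hXconst t₁ t₂)
  · exact h hYconst
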